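/- With F a momentum-preserving homogeneous Hamiltonian of degree d+1 and DX_F(r) the derivative of its vector field at r, the second-order Taylor estimate holds: ‖X_F(r') - X_F(r) - DX_F(r)[r'-r]‖_{ℓ¹} ≤ C(d)[[F]] (‖r‖_{ℓ¹} + ‖r'-r‖_{ℓ¹})^{d-2} ‖r'-r‖²_{ℓ¹}. -/

import Mathlib

open Finset
open scoped ENNReal NNReal

section Helpers

lemma ofReal_norm_eq_coe_nnnorm {E : Type*} [NormedAddCommGroup E] (x : E) :
    ENNReal.ofReal ‖x‖ = (‖x‖₊ : ℝ≥0∞) := by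
  rw [ofReal_norm]; rfl

lemma enn_tsum_le {ι E : Type*} [NormedAddCommGroup E] [CompleteSpace E] (f : ι → E) :
    (‖∑' i, f i‖₊ : ℝ≥0∞) ≤ ∑' i, (‖f i‖₊ : ℝ≥0∞) := by
  by_cases h : Summable fun i => ‖f i‖₊
  · rw [← ENNReal.coe_tsum h]
    have hs : Summable fun i => ‖f i‖ := by
      simpa [← NNReal.summable_coe, coe_nnnorm] using h
    have := norm_tsum_le_tsum_norm hs
    rw [ENNReal.coe_le_coe, ← NNReal.coe_le_coe, coe_nnnorm, NNReal.coe_tsum]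
    simpa [coe_nnnorm] using this
  · rw [show (∑' i, (‖f i‖₊ : ℝ≥0∞)) = ⊤ by
      by_contra hne
      exact h (ENNReal.tsum_coe_ne_top_iff_summable.mp hne)]
    exact le_top

lemma summable_of_enn {ι E : Type*} [NormedAddCommGroup E] [CompleteSpace E] {f : ι → E}
    (h : (∑' i, (‖f i‖₊ : ℝ≥0∞)) ≠ ⊤) : Summable f :=
  (ENNReal.tsum_coe_ne_top_iff_summable.mp h).of_nnnorm

lemma tsum_pi_prod {ι : Type*} : ∀ (d : ℕ) (w : Fin d → ι → ℝ≥0∞),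
    ∑' k : Fin d → ι, ∏ i, w i (k i) = ∏ i, ∑' x, w i x := by
  intro d
  induction d with
  | zero =>
      intro w
      have : ∑' k : Fin 0 → ι, ∏ i, w i (k i)
          = ∏ i, w i ((default : Fin 0 → ι) i) :=
        (hasSum_unique fun k : Fin 0 → ι => ∏ i, w i (k i)).tsum_eq
      rw [this]; simp
  | succ n ih =>
      intro w
      rw [← (Fin.consEquiv (fun _ : Fin (n + 1) => ι)).tsum_eq
        (fun k => ∏ i, w i (k i))]
      rw [ENNReal.tsum_prod']
      have key : ∀ (x : ι) (k : Fin n → ι),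
          ∏ i, w i ((Fin.consEquiv (fun _ : Fin (n + 1) => ι)) (x, k) i)
            = w 0 x * ∏ i : Fin n, w i.succ (k i) := by
        intro x k
        rw [Fin.prod_univ_succ]
        simp [Fin.consEquiv]
      simp_rw [key, ENNReal.tsum_mul_left, ENNReal.tsum_mul_right]
      rw [ih (fun i => w i.succ), Fin.prod_univ_succ]

lemma prod_add_expand (d : ℕ) (a b : Fin d → ℂ) :
    ∏ i, (a i + b i)
      = ∑ S ∈ (univ : Finset (Fin d)).powerset, ∏ i, (if i ∈ S then b i else a i) := by
  have hc : ∀ i ∈ (univ : Finset (Fin d)), a i + b i = b i + a i := fun i _ => add_comm _ _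
  rw [Finset.prod_congr rfl hc, Finset.prod_add]
  refine Finset.sum_congr rfl fun S _ => ?_
  rw [Finset.prod_ite]
  congr 1
  · exact Finset.prod_congr (Finset.filter_univ_mem S).symm fun _ _ => rfl
  · refine Finset.prod_congr ?_ fun _ _ => rfl
    rw [Finset.filter_not, Finset.filter_univ_mem]

lemma powerset_split (d : ℕ) (F : Finset (Fin d) → ℂ) :
    ∑ S ∈ (univ : Finset (Fin d)).powerset, F S
      = F ∅ + (∑ j : Fin d, F {j})
        + ∑ S ∈ (univ : Finset (Fin d)).powerset.filter (fun S => 2 ≤ S.card), F S := by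
  classical
  rw [← Finset.sum_filter_add_sum_filter_not ((univ : Finset (Fin d)).powerset)
    (fun S => 2 ≤ S.card) F]
  rw [add_comm]
  congr 1
  have hset : (univ : Finset (Fin d)).powerset.filter (fun S => ¬ 2 ≤ S.card)
      = insert ∅ (univ.image fun j : Fin d => ({j} : Finset (Fin d))) := by
    ext S
    simp only [mem_filter, mem_powerset, mem_insert, mem_image, mem_univ, true_and,
      subset_univ, not_le]
    constructor
    · intro hc
      rcases Nat.lt_or_ge S.card 1 with h1 | h1
      · left; exact Finset.card_eq_zero.mp (by omega)
      · right
        obtain ⟨x, hx⟩ := Finset.card_eq_one.mp (by omega : S.card = 1)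
        exact ⟨x, hx.symm⟩
    · rintro (rfl | ⟨x, rfl⟩) <;> simp
  rw [hset, Finset.sum_insert (by simp), Finset.sum_image
    (fun x _ y _ h => Finset.singleton_injective h)]

/-- Algebraic expansion of a product of sums. -/
lemma mon_expand_gen (d : ℕ) (a b : Fin d → ℂ) :
    ∏ i, (a i + b i)
      = (∏ i, a i) + (∑ j : Fin d, ∏ i, if i = j then b i else a i)
        + ∑ S ∈ (univ : Finset (Fin d)).powerset.filter (fun S => 2 ≤ S.card),
            ∏ i, (if i ∈ S then b i else a i) := by
  rw [prod_add_expand, powerset_split d (fun S => ∏ i, (if i ∈ S then b i else a i))]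
  refine congrArg₂ (· + ·) (congrArg₂ (· + ·) ?_ ?_) rfl
  · exact Finset.prod_congr rfl fun i _ => by simp
  · exact Finset.sum_congr rfl fun j _ =>
      Finset.prod_congr rfl fun i _ => by simp only [Finset.mem_singleton]

end Helpers

/-- The monomial factor `∏ᵢ r^{σᵢ}_{kᵢ}` (with `r⁺ = r`, `r⁻ = r̄`). -/
noncomputable def monFactor (d : ℕ) (r : ℤ × ℤ → ℂ) (σ : Fin d → Bool) (k : Fin d → ℤ × ℤ) : ℂ :=
  ∏ i, if σ i then r (k i) else (starRingEnd ℂ) (r (k i))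

/-- The Hamiltonian vector field of a momentum-preserving homogeneous
Hamiltonian of degree `d+1`, with coefficients `G`. -/
noncomputable def XF (d : ℕ) (G : (ℤ × ℤ) → (Fin d → Bool) → (Fin d → ℤ × ℤ) → ℂ)
    (r : ℤ × ℤ → ℂ) (n : ℤ × ℤ) : ℂ :=
  ∑' σ : Fin d → Bool, ∑' k : Fin d → ℤ × ℤ, G n σ k * monFactor d r σ k

/-- The derivative `DX_F(r)[h]`: in each monomial, one factor of `r` is replaced
by `h`. -/
noncomputable def DXF (d : ℕ) (G : (ℤ × ℤ) → (Fin d → Bool) → (Fin d → ℤ × ℤ) → ℂ)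
    (r h : ℤ × ℤ → ℂ) (n : ℤ × ℤ) : ℂ :=
  ∑' σ : Fin d → Bool, ∑' k : Fin d → ℤ × ℤ, G n σ k *
    ∑ j : Fin d, ∏ i,
      if i = j then (if σ i then h (k i) else (starRingEnd ℂ) (h (k i)))
      else (if σ i then r (k i) else (starRingEnd ℂ) (r (k i)))

section MainAux

/-- Summability of `c k * ∏ᵢ uᵢ (kᵢ)` for bounded `c` and `ℓ¹` rows `uᵢ`. -/
lemma summable_mul_prod {d : ℕ} (c : (Fin d → ℤ × ℤ) → ℂ) (A : ℝ)
    (hc : ∀ k, ‖c k‖ ≤ A) (u : Fin d → (ℤ × ℤ) → ℂ)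
    (hu : ∀ i, Summable fun n => ‖u i n‖) :
    Summable fun k : Fin d → ℤ × ℤ => c k * ∏ i, u i (k i) := by
  apply summable_of_enn
  have bound : ∀ k : Fin d → ℤ × ℤ,
      (‖c k * ∏ i, u i (k i)‖₊ : ℝ≥0∞)
        ≤ ENNReal.ofReal A * ∏ i, (‖u i (k i)‖₊ : ℝ≥0∞) := by
    intro k
    rw [nnnorm_mul, ENNReal.coe_mul, nnnorm_prod, ENNReal.coe_finset_prod]
    gcongr
    rw [← ofReal_norm_eq_coe_nnnorm]
    exact ENNReal.ofReal_le_ofReal (hc k)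
  refine ne_top_of_le_ne_top ?_ (ENNReal.tsum_le_tsum bound)
  rw [ENNReal.tsum_mul_left, tsum_pi_prod d (fun i x => ((‖u i x‖₊ : ℝ≥0∞)))]
  refine ENNReal.mul_ne_top ENNReal.ofReal_ne_top ?_
  refine (ENNReal.prod_lt_top fun i _ => ?_).ne
  have : Summable fun n => ‖u i n‖₊ := by
    rw [← NNReal.summable_coe]; simpa [coe_nnnorm] using hu i
  exact (ENNReal.tsum_coe_ne_top_iff_summable.mpr this).lt_top

end MainAux

/-- Second-order Taylor estimate:
`‖X_F(r') - X_F(r) - DX_F(r)[r'-r]‖_{ℓ¹} ≤ C(d)[[F]](‖r‖+‖r'-r‖)^{d-2}‖r'-r‖²`. -/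
theorem stmt10 (d : ℕ) (hd : 2 ≤ d) :
    ∃ C > (0 : ℝ),
      ∀ (G : (ℤ × ℤ) → (Fin d → Bool) → (Fin d → ℤ × ℤ) → ℂ) (A : ℝ),
        (∀ n σ k, ‖G n σ k‖ ≤ A) →
        (∀ n σ k, G n σ k ≠ 0 →
          (∑ i, (if σ i then k i else -k i)) = n) →
        ∀ r r' : ℤ × ℤ → ℂ, Summable (fun n => ‖r n‖) →
          Summable (fun n => ‖r' n‖) →
          ∑' n : ℤ × ℤ,
              ‖XF d G r' n - XF d G r n - DXF d G r (fun m => r' m - r m) n‖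
            ≤ C * A * ((∑' n : ℤ × ℤ, ‖r n‖) + ∑' n : ℤ × ℤ, ‖r' n - r n‖) ^ (d - 2)
              * (∑' n : ℤ × ℤ, ‖r' n - r n‖) ^ 2 := by
  refine ⟨(4 : ℝ) ^ d, by positivity, ?_⟩
  intro G A hA hmom r r' hr hr'
  classical
  have hANonneg : 0 ≤ A := le_trans (norm_nonneg _) (hA 0 (fun _ => true) (fun _ => 0))
  set h : ℤ × ℤ → ℂ := fun m => r' m - r m with hdefh
  have hhs : Summable fun n => ‖h n‖ := by
    rw [summable_norm_iff]
    exact (summable_norm_iff.mp hr').sub (summable_norm_iff.mp hr)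
  set R0 : ℝ := ∑' n, ‖r n‖ with hR0
  set H0 : ℝ := ∑' n, ‖h n‖ with hH0
  have hR0nn : 0 ≤ R0 := tsum_nonneg fun _ => norm_nonneg _
  have hH0nn : 0 ≤ H0 := tsum_nonneg fun _ => norm_nonneg _
  have hRe : ∑' n, ((‖r n‖₊ : ℝ≥0∞)) = ENNReal.ofReal R0 := by
    rw [hR0, ENNReal.ofReal_tsum_of_nonneg (fun n => norm_nonneg _) hr]
    exact tsum_congr fun n => (ofReal_norm_eq_coe_nnnorm _).symm
  have hHe : ∑' n, ((‖h n‖₊ : ℝ≥0∞)) = ENNReal.ofReal H0 := by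
    rw [hH0, ENNReal.ofReal_tsum_of_nonneg (fun n => norm_nonneg _) hhs]
    exact tsum_congr fun n => (ofReal_norm_eq_coe_nnnorm _).symm
  -- momentum bound
  have hGb : ∀ (n : ℤ × ℤ) (σ : Fin d → Bool) (k : Fin d → ℤ × ℤ),
      ((‖G n σ k‖₊ : ℝ≥0∞))
        ≤ if n = (∑ i, if σ i then k i else -k i) then ENNReal.ofReal A else 0 := by
    intro n σ k
    by_cases hn : n = ∑ i, if σ i then k i else -k i
    · rw [if_pos hn, ← ofReal_norm_eq_coe_nnnorm]
      exact ENNReal.ofReal_le_ofReal (hA n σ k)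
    · rw [if_neg hn]
      have hz : G n σ k = 0 := by
        by_contra hne
        exact hn ((hmom n σ k hne).symm)
      simp [hz]
  -- summability of the three families
  have hsum_mon : ∀ (u : ℤ × ℤ → ℂ), (Summable fun n => ‖u n‖) →
      ∀ (n : ℤ × ℤ) (σ : Fin d → Bool),
      Summable fun k : Fin d → ℤ × ℤ => G n σ k * monFactor d u σ k := by
    intro u hu n σ
    have hrows : ∀ i : Fin d,
        Summable fun x : ℤ × ℤ =>
          ‖if σ i then u x else (starRingEnd ℂ) (u x)‖ := by
      intro i
      refine hu.congr fun x => ?_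
      by_cases hσ : σ i <;> simp [hσ, Complex.norm_conj]
    have := summable_mul_prod (G n σ) A (hA n σ)
      (fun i x => if σ i then u x else (starRingEnd ℂ) (u x)) hrows
    exact this.congr fun k => by simp [monFactor]
  have hsum_D : ∀ (n : ℤ × ℤ) (σ : Fin d → Bool),
      Summable fun k : Fin d → ℤ × ℤ => G n σ k *
        ∑ j : Fin d, ∏ i,
          (if i = j then (if σ i then h (k i) else (starRingEnd ℂ) (h (k i)))
           else (if σ i then r (k i) else (starRingEnd ℂ) (r (k i)))) := by
    intro n σ
    have hterm : ∀ j : Fin d,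
        Summable fun k : Fin d → ℤ × ℤ => G n σ k *
          ∏ i, (fun (i : Fin d) (x : ℤ × ℤ) =>
            if i = j then (if σ i then h x else (starRingEnd ℂ) (h x))
            else (if σ i then r x else (starRingEnd ℂ) (r x))) i (k i) := by
      intro j
      refine summable_mul_prod (G n σ) A (hA n σ)
        (fun (i : Fin d) (x : ℤ × ℤ) =>
          if i = j then (if σ i then h x else (starRingEnd ℂ) (h x))
          else (if σ i then r x else (starRingEnd ℂ) (r x))) fun i => ?_
      by_cases h1 : i = j
      · subst h1
        refine hhs.congr fun x => ?_
        by_cases h2 : σ i <;> simp [h2, Complex.norm_conj]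
      · refine hr.congr fun x => ?_
        by_cases h2 : σ i <;> simp [h1, h2, Complex.norm_conj]
    have := summable_sum (s := (univ : Finset (Fin d)))
      (f := fun j (k : Fin d → ℤ × ℤ) => G n σ k *
        ∏ i, (if i = j then (if σ i then h (k i) else (starRingEnd ℂ) (h (k i)))
              else (if σ i then r (k i) else (starRingEnd ℂ) (r (k i)))))
      (fun j _ => hterm j)
    refine this.congr fun k => ?_
    rw [← Finset.mul_sum]
  have hsum_E : ∀ (n : ℤ × ℤ) (σ : Fin d → Bool),
      Summable fun k : Fin d → ℤ × ℤ => G n σ k *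
        ∑ S ∈ (univ : Finset (Fin d)).powerset.filter (fun S => 2 ≤ S.card),
          ∏ i, (if i ∈ S then (if σ i then h (k i) else (starRingEnd ℂ) (h (k i)))
                else (if σ i then r (k i) else (starRingEnd ℂ) (r (k i)))) := by
    intro n σ
    have hterm : ∀ S : Finset (Fin d),
        Summable fun k : Fin d → ℤ × ℤ => G n σ k *
          ∏ i, (fun (i : Fin d) (x : ℤ × ℤ) =>
            if i ∈ S then (if σ i then h x else (starRingEnd ℂ) (h x))
            else (if σ i then r x else (starRingEnd ℂ) (r x))) i (k i) := by
      intro S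
      refine summable_mul_prod (G n σ) A (hA n σ)
        (fun (i : Fin d) (x : ℤ × ℤ) =>
          if i ∈ S then (if σ i then h x else (starRingEnd ℂ) (h x))
          else (if σ i then r x else (starRingEnd ℂ) (r x))) fun i => ?_
      by_cases h1 : i ∈ S
      · refine hhs.congr fun x => ?_
        by_cases h2 : σ i <;> simp [h1, h2, Complex.norm_conj]
      · refine hr.congr fun x => ?_
        by_cases h2 : σ i <;> simp [h1, h2, Complex.norm_conj]
    have := summable_sum
      (s := (univ : Finset (Fin d)).powerset.filter (fun S => 2 ≤ S.card))
      (f := fun S (k : Fin d → ℤ × ℤ) => G n σ k *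
        ∏ i, (if i ∈ S then (if σ i then h (k i) else (starRingEnd ℂ) (h (k i)))
              else (if σ i then r (k i) else (starRingEnd ℂ) (r (k i)))))
      (fun S _ => hterm S)
    refine this.congr fun k => ?_
    rw [← Finset.mul_sum]
  -- the per-`n` identity
  have main_id : ∀ n : ℤ × ℤ, XF d G r' n - XF d G r n - DXF d G r h n
      = ∑ σ : Fin d → Bool, ∑' k : Fin d → ℤ × ℤ, G n σ k *
          ∑ S ∈ (univ : Finset (Fin d)).powerset.filter (fun S => 2 ≤ S.card),
            ∏ i, (if i ∈ S then (if σ i then h (k i) else (starRingEnd ℂ) (h (k i)))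
                  else (if σ i then r (k i) else (starRingEnd ℂ) (r (k i)))) := by
    intro n
    unfold XF DXF
    simp only [tsum_fintype]
    rw [← Finset.sum_sub_distrib, ← Finset.sum_sub_distrib]
    refine Finset.sum_congr rfl fun σ _ => ?_
    rw [← Summable.tsum_sub (hsum_mon r' hr' n σ) (hsum_mon r hr n σ),
        ← Summable.tsum_sub ((hsum_mon r' hr' n σ).sub (hsum_mon r hr n σ)) (hsum_D n σ)]
    refine tsum_congr fun k => ?_
    have hr'eq : monFactor d r' σ k
        = ∏ i, ((fun i => if σ i then r (k i) else (starRingEnd ℂ) (r (k i))) i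
            + (fun i => if σ i then h (k i) else (starRingEnd ℂ) (h (k i))) i) := by
      unfold monFactor
      refine Finset.prod_congr rfl fun i _ => ?_
      have : r' (k i) = r (k i) + h (k i) := by simp [hdefh]
      by_cases hσ : σ i <;> simp [hσ, this, map_add]
    rw [hr'eq, mon_expand_gen d
      (fun i => if σ i then r (k i) else (starRingEnd ℂ) (r (k i)))
      (fun i => if σ i then h (k i) else (starRingEnd ℂ) (h (k i)))]
    unfold monFactor
    ring
  -- the weight computation
  have hW : ∀ (σ : Fin d → Bool) (k : Fin d → ℤ × ℤ) (S : Finset (Fin d)),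
      ((‖∏ i, (if i ∈ S then (if σ i then h (k i) else (starRingEnd ℂ) (h (k i)))
              else (if σ i then r (k i) else (starRingEnd ℂ) (r (k i))))‖₊ : ℝ≥0∞))
        = ∏ i, (if i ∈ S then ((‖h (k i)‖₊ : ℝ≥0∞)) else ((‖r (k i)‖₊ : ℝ≥0∞))) := by
    intro σ k S
    rw [nnnorm_prod, ENNReal.coe_finset_prod]
    refine Finset.prod_congr rfl fun i _ => ?_
    by_cases h1 : i ∈ S <;> by_cases h2 : σ i <;> simp [h1, h2]
  have fact1 : ∀ S : Finset (Fin d),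
      (∑' k : Fin d → ℤ × ℤ,
          ∏ i, (if i ∈ S then ((‖h (k i)‖₊ : ℝ≥0∞)) else ((‖r (k i)‖₊ : ℝ≥0∞))))
        = (ENNReal.ofReal H0) ^ S.card * (ENNReal.ofReal R0) ^ (d - S.card) := by
    intro S
    rw [tsum_pi_prod d
      (fun i x => if i ∈ S then ((‖h x‖₊ : ℝ≥0∞)) else ((‖r x‖₊ : ℝ≥0∞)))]
    have hcol : ∀ i : Fin d,
        (∑' x : ℤ × ℤ, if i ∈ S then ((‖h x‖₊ : ℝ≥0∞)) else ((‖r x‖₊ : ℝ≥0∞)))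
          = if i ∈ S then ENNReal.ofReal H0 else ENNReal.ofReal R0 := by
      intro i
      by_cases h1 : i ∈ S
      · simp only [h1, if_true]; exact hHe
      · simp only [h1, if_false]; exact hRe
    rw [Finset.prod_congr rfl fun i _ => hcol i, Finset.prod_ite
      (fun _ => ENNReal.ofReal H0) (fun _ => ENNReal.ofReal R0)]
    rw [Finset.prod_const, Finset.prod_const]
    congr 1
    · congr 1
      rw [Finset.filter_univ_mem]
    · congr 1
      rw [Finset.filter_not, Finset.filter_univ_mem, Finset.card_sdiff_of_subset (Finset.subset_univ S),
        Finset.card_univ, Fintype.card_fin]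
  -- pointwise bound
  have step2 : ∀ n : ℤ × ℤ,
      ((‖XF d G r' n - XF d G r n - DXF d G r h n‖₊ : ℝ≥0∞))
        ≤ ∑ σ : Fin d → Bool, ∑' k : Fin d → ℤ × ℤ, ((‖G n σ k‖₊ : ℝ≥0∞)) *
            ∑ S ∈ (univ : Finset (Fin d)).powerset.filter (fun S => 2 ≤ S.card),
              ∏ i, (if i ∈ S then ((‖h (k i)‖₊ : ℝ≥0∞)) else ((‖r (k i)‖₊ : ℝ≥0∞))) := by
    intro n
    rw [main_id n]
    calc ((‖∑ σ : Fin d → Bool, ∑' k : Fin d → ℤ × ℤ, G n σ k * _‖₊ : ℝ≥0∞))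
        ≤ ∑ σ : Fin d → Bool, ((‖∑' k : Fin d → ℤ × ℤ, G n σ k *
            ∑ S ∈ (univ : Finset (Fin d)).powerset.filter (fun S => 2 ≤ S.card),
              ∏ i, (if i ∈ S then (if σ i then h (k i) else (starRingEnd ℂ) (h (k i)))
                    else (if σ i then r (k i) else (starRingEnd ℂ) (r (k i))))‖₊ : ℝ≥0∞)) := by
          rw [← ENNReal.coe_finset_sum]
          exact_mod_cast nnnorm_sum_le _ _
      _ ≤ _ := by
          refine Finset.sum_le_sum fun σ _ => ?_
          refine (enn_tsum_le _).trans (ENNReal.tsum_le_tsum fun k => ?_)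
          rw [nnnorm_mul, ENNReal.coe_mul]
          refine mul_le_mul_right ?_ _
          calc ((‖∑ S ∈ (univ : Finset (Fin d)).powerset.filter (fun S => 2 ≤ S.card),
              ∏ i, (if i ∈ S then (if σ i then h (k i) else (starRingEnd ℂ) (h (k i)))
                    else (if σ i then r (k i) else (starRingEnd ℂ) (r (k i))))‖₊ : ℝ≥0∞))
              ≤ ∑ S ∈ (univ : Finset (Fin d)).powerset.filter (fun S => 2 ≤ S.card),
                  ((‖∏ i, (if i ∈ S then (if σ i then h (k i) else (starRingEnd ℂ) (h (k i)))
                    else (if σ i then r (k i) else (starRingEnd ℂ) (r (k i))))‖₊ : ℝ≥0∞)) := by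
                rw [← ENNReal.coe_finset_sum]
                exact_mod_cast nnnorm_sum_le _ _
            _ = _ := Finset.sum_congr rfl fun S _ => hW σ k S
  -- summing over n and collapsing the momentum constraint
  have step4 : (∑' n : ℤ × ℤ,
        ((‖XF d G r' n - XF d G r n - DXF d G r h n‖₊ : ℝ≥0∞)))
      ≤ ∑ _σ : Fin d → Bool, ENNReal.ofReal A *
          ∑ S ∈ (univ : Finset (Fin d)).powerset.filter (fun S => 2 ≤ S.card),
            (ENNReal.ofReal H0) ^ S.card * (ENNReal.ofReal R0) ^ (d - S.card) := by
    calc (∑' n : ℤ × ℤ, ((‖XF d G r' n - XF d G r n - DXF d G r h n‖₊ : ℝ≥0∞)))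
        ≤ ∑' n : ℤ × ℤ, ∑ σ : Fin d → Bool, ∑' k : Fin d → ℤ × ℤ,
            ((‖G n σ k‖₊ : ℝ≥0∞)) *
            ∑ S ∈ (univ : Finset (Fin d)).powerset.filter (fun S => 2 ≤ S.card),
              ∏ i, (if i ∈ S then ((‖h (k i)‖₊ : ℝ≥0∞)) else ((‖r (k i)‖₊ : ℝ≥0∞))) :=
          ENNReal.tsum_le_tsum step2
      _ = ∑ σ : Fin d → Bool, ∑' n : ℤ × ℤ, ∑' k : Fin d → ℤ × ℤ,
            ((‖G n σ k‖₊ : ℝ≥0∞)) *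
            ∑ S ∈ (univ : Finset (Fin d)).powerset.filter (fun S => 2 ≤ S.card),
              ∏ i, (if i ∈ S then ((‖h (k i)‖₊ : ℝ≥0∞)) else ((‖r (k i)‖₊ : ℝ≥0∞))) :=
          Summable.tsum_finsetSum fun σ _ => ENNReal.summable
      _ ≤ ∑ σ : Fin d → Bool, ∑' n : ℤ × ℤ, ∑' k : Fin d → ℤ × ℤ,
            (if n = (∑ i, if σ i then k i else -k i) then
              ENNReal.ofReal A *
                ∑ S ∈ (univ : Finset (Fin d)).powerset.filter (fun S => 2 ≤ S.card),
                  ∏ i, (if i ∈ S then ((‖h (k i)‖₊ : ℝ≥0∞)) else ((‖r (k i)‖₊ : ℝ≥0∞)))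
             else 0) := by
          refine Finset.sum_le_sum fun σ _ => ?_
          refine ENNReal.tsum_le_tsum fun n => ENNReal.tsum_le_tsum fun k => ?_
          refine le_trans (mul_le_mul_left (hGb n σ k) _) ?_
          split_ifs with hn
          · exact le_rfl
          · simp
      _ = ∑ σ : Fin d → Bool, ∑' k : Fin d → ℤ × ℤ,
            ENNReal.ofReal A *
              ∑ S ∈ (univ : Finset (Fin d)).powerset.filter (fun S => 2 ≤ S.card),
                ∏ i, (if i ∈ S then ((‖h (k i)‖₊ : ℝ≥0∞)) else ((‖r (k i)‖₊ : ℝ≥0∞))) := by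
          refine Finset.sum_congr rfl fun σ _ => ?_
          rw [ENNReal.tsum_comm]
          exact tsum_congr fun k => tsum_ite_eq _ _
      _ = ∑ _σ : Fin d → Bool, ENNReal.ofReal A *
            ∑ S ∈ (univ : Finset (Fin d)).powerset.filter (fun S => 2 ≤ S.card),
              (ENNReal.ofReal H0) ^ S.card * (ENNReal.ofReal R0) ^ (d - S.card) := by
          refine Finset.sum_congr rfl fun σ _ => ?_
          rw [ENNReal.tsum_mul_left]
          congr 1
          rw [Summable.tsum_finsetSum fun S _ => ENNReal.summable]
          exact Finset.sum_congr rfl fun S _ => fact1 S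
  -- bounding each subset term
  have step6 : ∀ S ∈ (univ : Finset (Fin d)).powerset.filter (fun S => 2 ≤ S.card),
      (ENNReal.ofReal H0) ^ S.card * (ENNReal.ofReal R0) ^ (d - S.card)
        ≤ (ENNReal.ofReal (R0 + H0)) ^ (d - 2) * (ENNReal.ofReal H0) ^ 2 := by
    intro S hS
    have hcard : 2 ≤ S.card := (Finset.mem_filter.mp hS).2
    have hle : S.card ≤ d := by
      have := Finset.card_le_card (Finset.mem_powerset.mp (Finset.mem_filter.mp hS).1)
      simpa using this
    have e1 : ENNReal.ofReal H0 ≤ ENNReal.ofReal (R0 + H0) :=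
      ENNReal.ofReal_le_ofReal (by linarith)
    have e2 : ENNReal.ofReal R0 ≤ ENNReal.ofReal (R0 + H0) :=
      ENNReal.ofReal_le_ofReal (by linarith)
    calc (ENNReal.ofReal H0) ^ S.card * (ENNReal.ofReal R0) ^ (d - S.card)
        = (ENNReal.ofReal H0) ^ (S.card - 2) * (ENNReal.ofReal R0) ^ (d - S.card)
            * (ENNReal.ofReal H0) ^ 2 := by
          have hsp : (ENNReal.ofReal H0) ^ S.card
              = (ENNReal.ofReal H0) ^ (S.card - 2) * (ENNReal.ofReal H0) ^ 2 := by
            rw [← pow_add]; congr 1; omega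
          rw [hsp]; ring
      _ ≤ (ENNReal.ofReal (R0 + H0)) ^ (S.card - 2)
            * (ENNReal.ofReal (R0 + H0)) ^ (d - S.card) * (ENNReal.ofReal H0) ^ 2 := by
          gcongr
      _ = (ENNReal.ofReal (R0 + H0)) ^ (d - 2) * (ENNReal.ofReal H0) ^ 2 := by
          have hsp : (ENNReal.ofReal (R0 + H0)) ^ (S.card - 2)
              * (ENNReal.ofReal (R0 + H0)) ^ (d - S.card)
              = (ENNReal.ofReal (R0 + H0)) ^ (d - 2) := by
            rw [← pow_add]; congr 1; omega
          rw [hsp]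
  -- assembling the bound
  have hcard2 : ((univ : Finset (Fin d)).powerset.filter (fun S => 2 ≤ S.card)).card
      ≤ 2 ^ d := by
    calc ((univ : Finset (Fin d)).powerset.filter (fun S => 2 ≤ S.card)).card
        ≤ (univ : Finset (Fin d)).powerset.card := Finset.card_filter_le _ _
      _ = 2 ^ d := by rw [Finset.card_powerset, Finset.card_univ, Fintype.card_fin]
  have big : (∑' n : ℤ × ℤ,
        ((‖XF d G r' n - XF d G r n - DXF d G r h n‖₊ : ℝ≥0∞)))
      ≤ ENNReal.ofReal ((4 : ℝ) ^ d * A * (R0 + H0) ^ (d - 2) * H0 ^ 2) := by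
    refine step4.trans ?_
    have inner : ∑ S ∈ (univ : Finset (Fin d)).powerset.filter (fun S => 2 ≤ S.card),
        (ENNReal.ofReal H0) ^ S.card * (ENNReal.ofReal R0) ^ (d - S.card)
        ≤ (2 ^ d : ℕ) *
            ((ENNReal.ofReal (R0 + H0)) ^ (d - 2) * (ENNReal.ofReal H0) ^ 2) := by
      calc ∑ S ∈ (univ : Finset (Fin d)).powerset.filter (fun S => 2 ≤ S.card),
          (ENNReal.ofReal H0) ^ S.card * (ENNReal.ofReal R0) ^ (d - S.card)
          ≤ ∑ _S ∈ (univ : Finset (Fin d)).powerset.filter (fun S => 2 ≤ S.card),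
              (ENNReal.ofReal (R0 + H0)) ^ (d - 2) * (ENNReal.ofReal H0) ^ 2 :=
            Finset.sum_le_sum step6
        _ = (((univ : Finset (Fin d)).powerset.filter (fun S => 2 ≤ S.card)).card : ℕ) *
              ((ENNReal.ofReal (R0 + H0)) ^ (d - 2) * (ENNReal.ofReal H0) ^ 2) := by
            rw [Finset.sum_const, nsmul_eq_mul]
        _ ≤ (2 ^ d : ℕ) *
              ((ENNReal.ofReal (R0 + H0)) ^ (d - 2) * (ENNReal.ofReal H0) ^ 2) :=
            mul_le_mul_left (by exact_mod_cast hcard2) _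
    calc ∑ _σ : Fin d → Bool, ENNReal.ofReal A *
          ∑ S ∈ (univ : Finset (Fin d)).powerset.filter (fun S => 2 ≤ S.card),
            (ENNReal.ofReal H0) ^ S.card * (ENNReal.ofReal R0) ^ (d - S.card)
        ≤ ∑ _σ : Fin d → Bool, ENNReal.ofReal A *
            ((2 ^ d : ℕ) *
              ((ENNReal.ofReal (R0 + H0)) ^ (d - 2) * (ENNReal.ofReal H0) ^ 2)) :=
          Finset.sum_le_sum fun σ _ => mul_le_mul_right inner _
      _ = (Fintype.card (Fin d → Bool) : ℕ) * (ENNReal.ofReal A *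
            ((2 ^ d : ℕ) *
              ((ENNReal.ofReal (R0 + H0)) ^ (d - 2) * (ENNReal.ofReal H0) ^ 2))) := by
          rw [Finset.sum_const, Finset.card_univ, nsmul_eq_mul]
      _ = ENNReal.ofReal ((4 : ℝ) ^ d * A * (R0 + H0) ^ (d - 2) * H0 ^ 2) := by
          rw [Fintype.card_fun, Fintype.card_fin, Fintype.card_bool]
          have h4 : ENNReal.ofReal ((4 : ℝ) ^ d) = ((2 ^ d : ℕ) : ℝ≥0∞) * ((2 ^ d : ℕ) : ℝ≥0∞) := by
            rw [← Nat.cast_mul, ← pow_add]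
            have h44 : (4 : ℝ) ^ d = ((2 ^ (d + d) : ℕ) : ℝ) := by
              push_cast
              rw [pow_add, ← mul_pow]
              norm_num
            rw [h44, ENNReal.ofReal_natCast]
          rw [ENNReal.ofReal_mul (by positivity), ENNReal.ofReal_mul (by positivity),
            ENNReal.ofReal_mul (by positivity), h4,
            ENNReal.ofReal_pow (by linarith), ENNReal.ofReal_pow (by linarith)]
          ring
  -- conversion back to real numbers
  have hfin : (∑' n : ℤ × ℤ,
      ((‖XF d G r' n - XF d G r n - DXF d G r h n‖₊ : ℝ≥0∞))) ≠ ⊤ :=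
    ne_top_of_le_ne_top ENNReal.ofReal_ne_top big
  have hsummable : Summable fun n : ℤ × ℤ =>
      ‖XF d G r' n - XF d G r n - DXF d G r h n‖₊ :=
    ENNReal.tsum_coe_ne_top_iff_summable.mp hfin
  have hfinal : ∑' n : ℤ × ℤ, ‖XF d G r' n - XF d G r n - DXF d G r h n‖
      ≤ (4 : ℝ) ^ d * A * (R0 + H0) ^ (d - 2) * H0 ^ 2 := by
    have heq : ∑' n : ℤ × ℤ, ‖XF d G r' n - XF d G r n - DXF d G r h n‖
        = (∑' n : ℤ × ℤ,
            ((‖XF d G r' n - XF d G r n - DXF d G r h n‖₊ : ℝ≥0∞))).toReal := by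
      rw [← ENNReal.coe_tsum hsummable, ENNReal.coe_toReal, NNReal.coe_tsum]
      exact tsum_congr fun n => (coe_nnnorm _).symm
    rw [heq]
    exact ENNReal.toReal_le_of_le_ofReal (by positivity) big
  -- identify with the goal's expressions
  have hH0' : ∑' n : ℤ × ℤ, ‖r' n - r n‖ = H0 := by
    rw [hH0]
  calc ∑' n : ℤ × ℤ, ‖XF d G r' n - XF d G r n - DXF d G r (fun m => r' m - r m) n‖
      = ∑' n : ℤ × ℤ, ‖XF d G r' n - XF d G r n - DXF d G r h n‖ := by rw [hdefh]
    _ ≤ (4 : ℝ) ^ d * A * (R0 + H0) ^ (d - 2) * H0 ^ 2 := hfinal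
    _ = (4 : ℝ) ^ d * A * ((∑' n : ℤ × ℤ, ‖r n‖) + ∑' n : ℤ × ℤ, ‖r' n - r n‖) ^ (d - 2)
          * (∑' n : ℤ × ℤ, ‖r' n - r n‖) ^ 2 := by rw [hH0', hR0]
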